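/- Let r be a positive integer and α a real number with α ≥ 2. If 1 ∈ ℒ_r(α), then there exists a finite tree T with at least 2 vertices, maximum degree Δ(T) ≤ r and Laplacian spectral radius μ(T) = α. -/

import Mathlib

open Finset

/-- The set `ℒ_r(α)`: the smallest set of reals containing `α - 1` and closed under the rule:
for `1 ≤ s ≤ r - 1` and `q₁, …, q_s ∈ ℒ_r(α)`, if `β := α − 1 − s − ∑ qᵢ⁻¹ > 0`
then `β ∈ ℒ_r(α)`. -/
inductive LSet (r : ℕ) (α : ℝ) : ℝ → Prop
  | base : LSet r α (α - 1)
  | step (s : ℕ) (hs1 : 1 ≤ s) (hsr : s ≤ r - 1) (q : Fin s → ℝ)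
      (hmem : ∀ i, LSet r α (q i))
      (hpos : 0 < α - 1 - (s : ℝ) - ∑ i, (q i)⁻¹) :
      LSet r α (α - 1 - (s : ℝ) - ∑ i, (q i)⁻¹)

/-- `μ` is the Laplacian spectral radius of `G`, i.e. the largest eigenvalue of the
Laplacian matrix `D(G) - A(G)`. -/
def IsLapSpecRad {V : Type} [Fintype V] (G : SimpleGraph V) (μ : ℝ) : Prop :=
  letI := Classical.decEq V
  letI := Classical.decRel G.Adj
  μ ∈ spectrum ℝ (G.lapMatrix ℝ) ∧ ∀ x ∈ spectrum ℝ (G.lapMatrix ℝ), x ≤ μ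

/-- The maximum degree of a finite simple graph. -/
noncomputable def maxDeg {V : Type} [Fintype V] (G : SimpleGraph V) : ℕ :=
  letI := Classical.decRel G.Adj
  G.maxDegree


open SimpleGraph Matrix



def kids (n : ℕ) (p : ℕ → ℕ) (v : ℕ) : Finset ℕ :=
  (Finset.range n).filter fun u => u ≠ 0 ∧ p u = v

def graphOf (N : ℕ) (p : ℕ → ℕ) : SimpleGraph (Fin N) where
  Adj u v := u ≠ v ∧ (((u : ℕ) ≠ 0 ∧ p u = v) ∨ ((v : ℕ) ≠ 0 ∧ p v = u))
  symm := by
    constructor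
    intro u v ⟨h1, h2⟩
    exact ⟨h1.symm, h2.symm⟩
  loopless := ⟨fun v h => h.1 rfl⟩

lemma graphOf_adj' {N : ℕ} {p : ℕ → ℕ} {u v : Fin N} : (graphOf N p).Adj u v ↔
    (u ≠ v ∧ (((u : ℕ) ≠ 0 ∧ p u = v) ∨ ((v : ℕ) ≠ 0 ∧ p v = u))) := Iff.rfl

section GraphOf

variable {N : ℕ} {p : ℕ → ℕ}

lemma graphOf_adj_iff (hp : ∀ v : ℕ, v ≠ 0 → v < N → p v < v) (v u : Fin N) :
    (graphOf N p).Adj v u ↔ (((u : ℕ) ≠ 0 ∧ p u = v) ∨ ((v : ℕ) ≠ 0 ∧ p v = u)) := by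
  constructor
  · exact fun h => (graphOf_adj'.mp h).2.symm.imp id id
  · intro h
    refine graphOf_adj'.mpr ⟨?_, h.symm.imp id id⟩
    rcases h with ⟨h0, he⟩ | ⟨h0, he⟩
    · intro hvu; have := hp u h0 u.isLt; omega
    · intro hvu; have := hp v h0 v.isLt; omega

lemma sum_fin_kids {M : Type*} [AddCommMonoid M] (f : ℕ → M) (v : ℕ) :
    (∑ u : Fin N, if ((u : ℕ) ≠ 0 ∧ p u = v) then f u else 0) = ∑ u ∈ kids N p v, f u := by
  rw [kids, Finset.sum_filter,
    ← Fin.sum_univ_eq_sum_range (fun i => if (i ≠ 0 ∧ p i = v) then f i else 0) N]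

lemma sum_neighbors {M : Type*} [AddCommMonoid M] [DecidableRel (graphOf N p).Adj]
    (hp : ∀ v : ℕ, v ≠ 0 → v < N → p v < v) (f : ℕ → M) (v : Fin N) :
    (∑ u ∈ (graphOf N p).neighborFinset v, f u)
      = (∑ u ∈ kids N p v, f u) + (if (v : ℕ) = 0 then 0 else f (p v)) := by
  classical
  rw [SimpleGraph.neighborFinset_eq_filter, Finset.sum_filter]
  have hsplit : ∀ u : Fin N, (if (graphOf N p).Adj v u then f u else 0)
      = (if ((u : ℕ) ≠ 0 ∧ p u = v) then f u else 0)
        + (if ((v : ℕ) ≠ 0 ∧ p v = u) then f u else 0) := by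
    intro u
    rw [if_congr (graphOf_adj_iff hp v u) rfl rfl]
    by_cases h1 : ((u : ℕ) ≠ 0 ∧ p u = v)
    · have h2 : ¬ ((v : ℕ) ≠ 0 ∧ p v = u) := by
        rintro ⟨hv0, hpv⟩
        have := hp u h1.1 u.isLt
        have := hp v hv0 v.isLt
        omega
      simp [h1, h2]
    · by_cases h2 : ((v : ℕ) ≠ 0 ∧ p v = u) <;> simp [h1, h2]
  rw [Finset.sum_congr rfl (fun u _ => hsplit u), Finset.sum_add_distrib, sum_fin_kids]
  congr 1
  by_cases hv : (v : ℕ) = 0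
  · simp [hv]
  · have hlt : p v < N := lt_trans (hp v hv v.isLt) v.isLt
    have : ∀ u : Fin N, ((v : ℕ) ≠ 0 ∧ p v = u) ↔ u = ⟨p v, hlt⟩ := by
      intro u
      constructor
      · rintro ⟨-, h⟩; exact Fin.ext h.symm
      · rintro rfl; exact ⟨hv, rfl⟩
    rw [Finset.sum_congr rfl (fun u _ => if_congr (this u) rfl rfl),
      Finset.sum_ite_eq' univ _ (fun u : Fin N => f u)]
    simp [hv]

lemma degree_graphOf [DecidableRel (graphOf N p).Adj]
    (hp : ∀ v : ℕ, v ≠ 0 → v < N → p v < v) (v : Fin N) :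
    (graphOf N p).degree v = (kids N p v).card + (if (v : ℕ) = 0 then 0 else 1) := by
  classical
  rw [← SimpleGraph.card_neighborFinset_eq_degree, Finset.card_eq_sum_ones,
    sum_neighbors hp (fun _ => 1) v, Finset.card_eq_sum_ones]

end GraphOf

variable {N : ℕ} {p : ℕ → ℕ}

lemma graphOf_isAcyclic (hp : ∀ v : ℕ, v ≠ 0 → v < N → p v < v) :
    (graphOf N p).IsAcyclic := by
  intro v c hc
  have hv : v ∈ c.support := c.start_mem_support
  obtain ⟨m, hm, hmax⟩ := Finset.exists_max_image c.support.toFinset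
    (fun x : Fin N => (x : ℕ)) ⟨v, List.mem_toFinset.2 hv⟩
  rw [List.mem_toFinset] at hm
  have hmax' : ∀ x ∈ c.support, (x : ℕ) ≤ m := fun x hx => hmax x (List.mem_toFinset.2 hx)
  have hcyc : (c.rotate m hm).IsCycle := hc.rotate hm
  have hsupp : ∀ x ∈ (c.rotate m hm).support.tail, (x : ℕ) ≤ m := by
    intro x hx
    exact hmax' x (List.mem_of_mem_tail ((Walk.support_rotate c m hm).mem_iff.1 hx))
  have hlen3 : 3 ≤ (c.rotate m hm).length := hcyc.three_le_length
  obtain ⟨u, hadj, q, heq⟩ := Walk.not_nil_iff.mp hcyc.not_nil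
  -- facts about q
  have hqlen : q.length + 1 = (c.rotate m hm).length := by rw [heq]; simp
  have hqtail : (c.rotate m hm).support.tail = q.support := by rw [heq, Walk.support_cons]; rfl
  have hqnodup : q.support.Nodup := by rw [← hqtail]; exact hcyc.support_nodup
  have hqn : ¬ q.reverse.Nil := by
    rw [Walk.nil_iff_length_eq, Walk.length_reverse]
    omega
  obtain ⟨w, hwadj, q2, heq2⟩ := Walk.not_nil_iff.mp hqn
  have hq2len : q2.length + 2 = (c.rotate m hm).length := by
    have : q.reverse.length = q2.length + 1 := by rw [heq2]; simp
    rw [Walk.length_reverse] at this; omega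
  have hq2supp : q.support = q2.support.reverse ++ [m] := by
    have : q.reverse.support = m :: q2.support := by rw [heq2, Walk.support_cons]
    have h3 : q.support.reverse = m :: q2.support := by
      rw [← Walk.support_reverse]; exact this
    rw [← q.support.reverse_reverse, h3, List.reverse_cons]
  -- u and w are both in q.support
  have hu : u ∈ q.support := q.start_mem_support
  have hw : w ∈ q.support := by
    rw [hq2supp]
    exact List.mem_append_left _ (List.mem_reverse.2 q2.start_mem_support)
  -- maximality: both u and w equal p m
  have key : ∀ x : Fin N, (graphOf N p).Adj m x → x ∈ q.support → (x : ℕ) = p m := by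
    intro x hxadj hxs
    have hxle : (x : ℕ) ≤ m := hsupp x (by rwa [hqtail])
    rcases (graphOf_adj'.mp hxadj).2 with ⟨h0, he⟩ | ⟨h0, he⟩
    · exact he.symm
    · exfalso; have := hp x h0 x.isLt; omega
  have hu' := key u hadj hu
  have hw' := key w (by
    have : (graphOf N p).Adj m w := hwadj
    exact this) hw
  have huw : u = w := Fin.ext (by omega)
  subst huw
  -- now q2 : Walk u u is a path hence nil
  have hq2nodup : q2.support.Nodup := by
    rw [hq2supp] at hqnodup
    have := (List.nodup_append.mp hqnodup).1
    exact (List.nodup_reverse.mp this)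
  have : q2 = Walk.nil := (Walk.isPath_iff_eq_nil (p := q2)).mp (Walk.IsPath.mk' hq2nodup)
  rw [this] at hq2len
  simp only [Walk.length_nil, zero_add] at hq2len
  omega

lemma graphOf_reach (hp : ∀ v : ℕ, v ≠ 0 → v < N → p v < v) (hN : 0 < N) :
    ∀ k (v : Fin N), (v : ℕ) ≤ k → (graphOf N p).Reachable v ⟨0, hN⟩ := by
  intro k
  induction k with
  | zero => intro v hv; exact Walk.reachable (Walk.nil.copy (Fin.ext (show (v:ℕ) = 0 by omega)).symm rfl)
  | succ k ih =>
    intro v hv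
    by_cases h0 : (v : ℕ) = 0
    · exact Walk.reachable (Walk.nil.copy (Fin.ext (show (v:ℕ) = 0 by omega)).symm rfl)
    · have hlt : p v < v := hp v h0 v.isLt
      have hpn : p (v : ℕ) < N := lt_trans hlt v.isLt
      have hadj : (graphOf N p).Adj v ⟨p v, hpn⟩ :=
        graphOf_adj'.mpr ⟨fun he => by have := congrArg Fin.val he; simp at this; omega, Or.inl ⟨h0, rfl⟩⟩
      exact (hadj.reachable).trans (ih ⟨p v, hpn⟩ (show p (v:ℕ) ≤ k by omega))

lemma graphOf_connected (hp : ∀ v : ℕ, v ≠ 0 → v < N → p v < v) (hN : 0 < N) :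
    (graphOf N p).Connected := by
  have h : ∀ v : Fin N, (graphOf N p).Reachable v ⟨0, hN⟩ :=
    fun v => graphOf_reach hp hN v v (le_refl _)
  haveI : Nonempty (Fin N) := ⟨⟨0, hN⟩⟩
  exact ⟨fun u v => (h u).trans (h v).symm⟩

lemma graphOf_isTree (hp : ∀ v : ℕ, v ≠ 0 → v < N → p v < v) (hN : 0 < N) :
    (graphOf N p).IsTree :=
  ⟨graphOf_connected hp hN, graphOf_isAcyclic hp⟩

lemma matrix_mem_spectrum_iff {n : Type*} [Fintype n] [DecidableEq n]
    (M : Matrix n n ℝ) (μ : ℝ) :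
    μ ∈ spectrum ℝ M ↔ ∃ v, v ≠ 0 ∧ M.mulVec v = μ • v := by
  rw [spectrum.mem_iff, Matrix.isUnit_iff_isUnit_det, isUnit_iff_ne_zero, not_not,
    ← Matrix.exists_mulVec_eq_zero_iff]
  have key : ∀ v, (algebraMap ℝ (Matrix n n ℝ) μ - M) *ᵥ v = μ • v - M *ᵥ v := by
    intro v
    rw [Matrix.sub_mulVec, Algebra.algebraMap_eq_smul_one, Matrix.smul_mulVec,
      Matrix.one_mulVec]
  constructor
  · rintro ⟨v, hv, h⟩
    refine ⟨v, hv, ?_⟩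
    rw [key] at h
    have := sub_eq_zero.mp h
    exact this.symm
  · rintro ⟨v, hv, h⟩
    exact ⟨v, hv, by rw [key, h, sub_self]⟩

lemma spec_bound {V : Type*} [Fintype V] [DecidableEq V] (hne : Nonempty V)
    (G : SimpleGraph V) [DecidableRel G.Adj] (σ : V → ℝ)
    (hσ : ∀ v, σ v = 1 ∨ σ v = -1) (hadj : ∀ u v, G.Adj u v → σ u * σ v = -1)
    (y : V → ℝ) (hy : ∀ v, 0 < y v) (α : ℝ)
    (heig : ∀ v, (G.degree v : ℝ) * y v + ∑ u ∈ G.neighborFinset v, y u = α * y v) :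
    α ∈ spectrum ℝ (G.lapMatrix ℝ) ∧ ∀ x ∈ spectrum ℝ (G.lapMatrix ℝ), x ≤ α := by
  have hσsq : ∀ v, σ v * σ v = 1 := by
    intro v; rcases hσ v with h | h <;> rw [h] <;> norm_num
  have hσne : ∀ v, σ v ≠ 0 := by
    intro v; rcases hσ v with h | h <;> rw [h] <;> norm_num
  have hsign : ∀ v u, G.Adj v u → σ u = -σ v := by
    intro v u h
    have h1 := hadj v u h
    have : σ v * (σ v * σ u) = σ v * (-1) := by rw [h1]
    rwa [← mul_assoc, hσsq, one_mul, mul_neg_one] at this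
  constructor
  · -- α is an eigenvalue
    rw [matrix_mem_spectrum_iff]
    refine ⟨fun v => σ v * y v, ?_, ?_⟩
    · intro h
      obtain ⟨v0⟩ := hne
      have := congrFun h v0
      simp only [Pi.zero_apply] at this
      exact (mul_ne_zero (hσne v0) (hy v0).ne') this
    · funext v
      rw [lapMatrix_mulVec_apply]
      have hnb : ∑ u ∈ G.neighborFinset v, σ u * y u = -σ v * ∑ u ∈ G.neighborFinset v, y u := by
        rw [Finset.mul_sum]
        refine Finset.sum_congr rfl fun u hu => ?_
        rw [hsign v u ((G.mem_neighborFinset v u).mp hu)]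
      rw [hnb]
      simp only [Pi.smul_apply, smul_eq_mul]
      linear_combination σ v * heig v
  · -- α is the largest eigenvalue
    intro lam hlam
    rw [matrix_mem_spectrum_iff] at hlam
    obtain ⟨z, hz, hzeq⟩ := hlam
    set w : V → ℝ := fun v => σ v * z v with hw
    have hweq : ∀ v, lam * w v = (G.degree v : ℝ) * w v + ∑ u ∈ G.neighborFinset v, w u := by
      intro v
      have h1 : (G.degree v : ℝ) * z v - ∑ u ∈ G.neighborFinset v, z u = lam * z v := by
        have := congrFun hzeq v
        rw [lapMatrix_mulVec_apply] at this
        simpa using this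
      have h2 : ∑ u ∈ G.neighborFinset v, w u = -σ v * ∑ u ∈ G.neighborFinset v, z u := by
        rw [Finset.mul_sum]
        refine Finset.sum_congr rfl fun u hu => ?_
        show σ u * z u = -σ v * z u
        rw [hsign v u ((G.mem_neighborFinset v u).mp hu)]
      rw [h2]
      show lam * (σ v * z v) = (G.degree v : ℝ) * (σ v * z v) + -σ v * ∑ u ∈ G.neighborFinset v, z u
      linear_combination (-σ v) * h1
    -- the maximiser of |w|/y
    obtain ⟨v0, -, hmax⟩ := Finset.exists_max_image Finset.univ
      (fun v => |w v| / y v) (univ_nonempty_iff.mpr hne)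
    set c : ℝ := |w v0| / y v0 with hc
    have hble : ∀ u, |w u| ≤ c * y u := by
      intro u
      have h := hmax u (mem_univ u)
      rw [div_le_div_iff₀ (hy u) (hy v0)] at h
      rw [hc, div_mul_eq_mul_div, le_div_iff₀ (hy v0)]
      linarith
    have hcpos : 0 < c := by
      have : ∃ u, z u ≠ 0 := by
        by_contra hcon
        push_neg at hcon
        exact hz (funext fun u => hcon u)
      obtain ⟨u, hu⟩ := this
      have hwu : w u ≠ 0 := mul_ne_zero (hσne u) hu
      have : 0 < |w u| / y u := div_pos (abs_pos.mpr hwu) (hy u)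
      exact lt_of_lt_of_le this (hmax u (mem_univ u))
    have hwv0 : |w v0| = c * y v0 := by
      rw [hc, div_mul_eq_mul_div, eq_div_iff (hy v0).ne']
    have hb : |lam| * (c * y v0) ≤ α * (c * y v0) := by
      have h1 : |lam * w v0| = |lam| * |w v0| := abs_mul _ _
      have h2 : |lam * w v0| ≤ (G.degree v0 : ℝ) * |w v0| + ∑ u ∈ G.neighborFinset v0, |w u| := by
        rw [hweq v0]
        calc |(G.degree v0 : ℝ) * w v0 + ∑ u ∈ G.neighborFinset v0, w u|
            ≤ |(G.degree v0 : ℝ) * w v0| + |∑ u ∈ G.neighborFinset v0, w u| := abs_add_le _ _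
        _ ≤ (G.degree v0 : ℝ) * |w v0| + ∑ u ∈ G.neighborFinset v0, |w u| := by
            gcongr
            · rw [abs_mul, abs_of_nonneg (by positivity : (0:ℝ) ≤ (G.degree v0 : ℝ))]
            · exact Finset.abs_sum_le_sum_abs _ _
      have h3 : (G.degree v0 : ℝ) * |w v0| + ∑ u ∈ G.neighborFinset v0, |w u|
          ≤ (G.degree v0 : ℝ) * (c * y v0) + ∑ u ∈ G.neighborFinset v0, c * y u := by
        gcongr with u hu
        · rw [hwv0]
        · exact hble u
      have h4 : (G.degree v0 : ℝ) * (c * y v0) + ∑ u ∈ G.neighborFinset v0, c * y u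
          = c * ((G.degree v0 : ℝ) * y v0 + ∑ u ∈ G.neighborFinset v0, y u) := by
        rw [← Finset.mul_sum]; ring
      rw [← hwv0]
      calc |lam| * |w v0| = |lam * w v0| := (abs_mul _ _).symm
      _ ≤ (G.degree v0 : ℝ) * (c * y v0) + ∑ u ∈ G.neighborFinset v0, c * y u := le_trans h2 h3
      _ = c * ((G.degree v0 : ℝ) * y v0 + ∑ u ∈ G.neighborFinset v0, y u) := h4
      _ = c * (α * y v0) := by rw [heig v0]
      _ = α * (c * y v0) := by ring
      _ = α * |w v0| := by rw [hwv0]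
    have hpos : 0 < c * y v0 := mul_pos hcpos (hy v0)
    have : |lam| ≤ α := le_of_mul_le_mul_right (by linarith [hb]) hpos
    calc lam ≤ |lam| := le_abs_self lam
    _ ≤ α := this
def comb (m : ℕ) (pa pb : ℕ → ℕ) : ℕ → ℕ := fun v =>
  if v < m then pa v else if v = m then 0 else m + pb (v - m)

section Comb

variable {m n : ℕ} {pa pb : ℕ → ℕ}

lemma kids_comb_left (hm : 0 < m) (v : ℕ) (hv : v < m) (hv0 : v ≠ 0) :
    kids (m + n) (comb m pa pb) v = kids m pa v := by
  ext u
  simp only [kids, Finset.mem_filter, Finset.mem_range]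
  simp only [comb]
  constructor
  · rintro ⟨hu, hu0, hpu⟩
    by_cases h1 : u < m
    · rw [if_pos h1] at hpu; exact ⟨h1, hu0, hpu⟩
    · exfalso
      by_cases h2 : u = m
      · rw [if_neg h1, if_pos h2] at hpu; exact hv0 hpu.symm
      · rw [if_neg h1, if_neg h2] at hpu; omega
  · rintro ⟨hu, hu0, hpu⟩
    exact ⟨by omega, hu0, by rw [if_pos hu]; exact hpu⟩

lemma kids_comb_root (hm : 0 < m) (hn : 0 < n) :
    kids (m + n) (comb m pa pb) 0 = insert m (kids m pa 0) := by
  ext u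
  simp only [kids, Finset.mem_filter, Finset.mem_range, mem_insert]
  simp only [comb]
  constructor
  · rintro ⟨hu, hu0, hpu⟩
    by_cases h1 : u < m
    · rw [if_pos h1] at hpu; exact Or.inr ⟨h1, hu0, hpu⟩
    · by_cases h2 : u = m
      · exact Or.inl h2
      · rw [if_neg h1, if_neg h2] at hpu; omega
  · rintro (rfl | ⟨hu, hu0, hpu⟩)
    · exact ⟨by omega, by omega, by rw [if_neg (lt_irrefl u), if_pos rfl]⟩
    · exact ⟨by omega, hu0, by rw [if_pos hu]; exact hpu⟩

lemma kids_comb_right (hm : 0 < m) (hpa : ∀ v, v ≠ 0 → v < m → pa v < v)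
    (j : ℕ) (hj : j < n) :
    kids (m + n) (comb m pa pb) (m + j) = (kids n pb j).image (fun u => m + u) := by
  ext u
  simp only [kids, Finset.mem_filter, Finset.mem_range, mem_image]
  simp only [comb]
  constructor
  · rintro ⟨hu, hu0, hpu⟩
    by_cases h1 : u < m
    · exfalso; rw [if_pos h1] at hpu; have := hpa u hu0 h1; omega
    · by_cases h2 : u = m
      · exfalso; rw [if_neg h1, if_pos h2] at hpu; omega
      · rw [if_neg h1, if_neg h2] at hpu
        exact ⟨u - m, ⟨by omega, by omega, by omega⟩, by omega⟩
  · rintro ⟨u', ⟨hu', hu'0, hpu'⟩, rfl⟩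
    refine ⟨by omega, by omega, ?_⟩
    rw [if_neg (by omega), if_neg (by omega)]
    congr 1
    rw [Nat.add_sub_cancel_left]
    exact hpu'

lemma sum_kids_image {M : Type*} [AddCommMonoid M] (s : Finset ℕ) (f : ℕ → M) :
    ∑ u ∈ s.image (fun u => m + u), f u = ∑ u ∈ s, f (m + u) :=
  Finset.sum_image (fun a _ b _ h => by omega)

lemma card_kids_image (s : Finset ℕ) :
    (s.image (fun u => m + u)).card = s.card :=
  Finset.card_image_of_injective _ (fun a b h => by omega)

lemma kids_one (p : ℕ → ℕ) (v : ℕ) : kids 1 p v = ∅ := by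
  ext u
  simp only [kids, Finset.mem_filter, Finset.mem_range, Finset.notMem_empty, iff_false]
  omega

end Comb

structure RT (r : ℕ) (α : ℝ) (q : ℝ) : Type where
  n : ℕ
  hn : 0 < n
  par : ℕ → ℕ
  y : ℕ → ℝ
  col : ℕ → Bool
  hpar : ∀ v, v ≠ 0 → v < n → par v < v
  hy : ∀ v, v < n → 0 < y v
  hcol : ∀ v, v ≠ 0 → v < n → col (par v) ≠ col v
  hdeg : ∀ v, v ≠ 0 → v < n → (kids n par v).card + 1 ≤ r
  heig : ∀ v, v ≠ 0 → v < n →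
    ((kids n par v).card + 1 : ℝ) * y v + (y (par v) + ∑ u ∈ kids n par v, y u) = α * y v
  heig0 : ((kids n par 0).card : ℝ) * y 0 + ∑ u ∈ kids n par 0, y u = (α - 1 - q) * y 0

def RT.base (r : ℕ) (α : ℝ) : RT r α (α - 1) where
  n := 1
  hn := one_pos
  par := fun _ => 0
  y := fun _ => 1
  col := fun _ => false
  hpar := fun v h0 h1 => absurd (by omega) h0
  hy := fun v _ => one_pos
  hcol := fun v h0 h1 => absurd (by omega) h0
  hdeg := fun v h0 h1 => absurd (by omega) h0
  heig := fun v h0 h1 => absurd (by omega) h0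
  heig0 := by simp [kids_one]

lemma RT.base_kids (r : ℕ) (α : ℝ) :
    (kids (RT.base r α).n (RT.base r α).par 0).card = 0 := by
  simp [RT.base, kids_one]

noncomputable def RT.attach {r : ℕ} {α qa qb : ℝ} (a : RT r α qa) (b : RT r α qb)
    (hqb : 0 < qb) (hrb : (kids b.n b.par 0).card + 1 ≤ r) : RT r α (qa - 1 - qb⁻¹) where
  n := a.n + b.n
  hn := by have := a.hn; omega
  par := comb a.n a.par b.par
  y := fun v => if v < a.n then a.y v else (a.y 0 / (qb * b.y 0)) * b.y (v - a.n)
  col := fun v => if v < a.n then a.col v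
    else ((b.col (v - a.n)) != (b.col 0)) != !(a.col 0)
  hpar := by
    intro v h0 hv
    by_cases h1 : v < a.n
    · rw [comb, if_pos h1]; exact a.hpar v h0 h1
    · by_cases h2 : v = a.n
      · rw [comb, if_neg h1, if_pos h2]; omega
      · rw [comb, if_neg h1, if_neg h2]
        have := b.hpar (v - a.n) (by omega) (by omega)
        omega
  hy := by
    intro v hv
    have hc : 0 < a.y 0 / (qb * b.y 0) :=
      div_pos (a.hy 0 a.hn) (mul_pos hqb (b.hy 0 b.hn))
    by_cases h1 : v < a.n
    · rw [if_pos h1]; exact a.hy v h1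
    · rw [if_neg h1]; exact mul_pos hc (b.hy (v - a.n) (by omega))
  hcol := by
    intro v h0 hv
    by_cases h1 : v < a.n
    · rw [comb, if_pos h1]
      have hlt := a.hpar v h0 h1
      rw [if_pos (by omega : a.par v < a.n), if_pos h1]
      exact a.hcol v h0 h1
    · by_cases h2 : v = a.n
      · rw [comb, if_neg h1, if_pos h2, if_pos a.hn, if_neg h1, h2]
        simp only [Nat.sub_self, bne_self_eq_false, Bool.false_bne]
        cases a.col 0 <;> simp
      · rw [comb, if_neg h1, if_neg h2, if_neg (by omega : ¬ a.n + b.par (v - a.n) < a.n),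
          if_neg h1]
        have hbc := b.hcol (v - a.n) (by omega) (by omega)
        rw [Nat.add_sub_cancel_left]
        intro hcon
        apply hbc
        cases hb1 : b.col (b.par (v - a.n)) <;> cases hb2 : b.col (v - a.n) <;>
          cases hb3 : b.col 0 <;> cases hb4 : a.col 0 <;> simp_all
  hdeg := by
    intro v h0 hv
    by_cases h1 : v < a.n
    · rw [kids_comb_left a.hn v h1 h0]; exact a.hdeg v h0 h1
    · have hj : v - a.n < b.n := by omega
      have hv' : v = a.n + (v - a.n) := by omega
      rw [hv', kids_comb_right a.hn a.hpar _ hj, card_kids_image]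
      by_cases h2 : v = a.n
      · have : v - a.n = 0 := by omega
        rw [this]; exact hrb
      · exact b.hdeg (v - a.n) (by omega) hj
  heig := by
    intro v h0 hv
    have hay0 : a.y 0 = (a.y 0 / (qb * b.y 0)) * (qb * b.y 0) :=
      (div_mul_cancel₀ _ (mul_pos hqb (b.hy 0 b.hn)).ne').symm
    by_cases h1 : v < a.n
    · rw [kids_comb_left a.hn v h1 h0]
      rw [show comb a.n a.par b.par v = a.par v from by rw [comb, if_pos h1]]
      rw [if_pos h1, if_pos (show a.par v < a.n by have := a.hpar v h0 h1; omega)]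
      have hsum : ∑ u ∈ kids a.n a.par v, (if u < a.n then a.y u
          else (a.y 0 / (qb * b.y 0)) * b.y (u - a.n)) = ∑ u ∈ kids a.n a.par v, a.y u := by
        refine Finset.sum_congr rfl fun u hu => ?_
        have : u < a.n := by
          simp only [kids, Finset.mem_filter, Finset.mem_range] at hu; exact hu.1
        rw [if_pos this]
      rw [hsum]
      exact a.heig v h0 h1
    · have hj : v - a.n < b.n := by omega
      have hv' : v = a.n + (v - a.n) := by omega
      set c := a.y 0 / (qb * b.y 0) with hc
      have hsum : ∀ j, j < b.n → ∑ u ∈ (kids b.n b.par j).image (fun u => a.n + u),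
          (if u < a.n then a.y u else c * b.y (u - a.n)) = c * ∑ u ∈ kids b.n b.par j, b.y u := by
        intro j hjn
        rw [sum_kids_image, Finset.mul_sum]
        refine Finset.sum_congr rfl fun u hu => ?_
        rw [if_neg (by omega), Nat.add_sub_cancel_left]
      by_cases h2 : v = a.n
      · -- v is the root of b
        have hj0 : v - a.n = 0 := by omega
        rw [hv', hj0, kids_comb_right a.hn a.hpar 0 b.hn, card_kids_image,
          show comb a.n a.par b.par (a.n + 0) = 0 from by
            rw [comb, Nat.add_zero, if_neg (lt_irrefl a.n), if_pos rfl],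
          hsum 0 b.hn]
        rw [if_neg (by omega : ¬ a.n + 0 < a.n), if_pos a.hn, Nat.add_sub_cancel_left]
        have hb0 := b.heig0
        linear_combination c * hb0 + hay0
      · -- v is a non-root vertex of b
        have hj0 : v - a.n ≠ 0 := by omega
        rw [hv', kids_comb_right a.hn a.hpar _ hj, card_kids_image,
          show comb a.n a.par b.par (a.n + (v - a.n)) = a.n + b.par (v - a.n) from by
            rw [comb, if_neg (by omega), if_neg (by omega), Nat.add_sub_cancel_left],
          hsum _ hj]
        rw [if_neg (by omega : ¬ a.n + (v - a.n) < a.n),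
          if_neg (by omega : ¬ a.n + b.par (v - a.n) < a.n)]
        rw [Nat.add_sub_cancel_left, Nat.add_sub_cancel_left]
        have hbe := b.heig (v - a.n) hj0 hj
        linear_combination c * hbe
  heig0 := by
    set c := a.y 0 / (qb * b.y 0) with hc
    have hby0 : b.y 0 ≠ 0 := (b.hy 0 b.hn).ne'
    have hc' : c * b.y 0 = qb⁻¹ * a.y 0 := by
      rw [hc]; field_simp
    rw [kids_comb_root a.hn b.hn, Finset.card_insert_of_notMem (by
      simp only [kids, Finset.mem_filter, Finset.mem_range]; omega),
      Finset.sum_insert (by simp only [kids, Finset.mem_filter, Finset.mem_range]; omega)]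
    rw [if_pos a.hn, if_neg (lt_irrefl a.n), Nat.sub_self]
    have hsum : ∑ u ∈ kids a.n a.par 0, (if u < a.n then a.y u else c * b.y (u - a.n))
        = ∑ u ∈ kids a.n a.par 0, a.y u := by
      refine Finset.sum_congr rfl fun u hu => ?_
      have : u < a.n := by simp only [kids, Finset.mem_filter, Finset.mem_range] at hu; exact hu.1
      rw [if_pos this]
    rw [hsum]
    have ha0 := a.heig0
    push_cast
    linear_combination ha0 + hc'

lemma RT.attach_kids {r : ℕ} {α qa qb : ℝ} (a : RT r α qa) (b : RT r α qb)
    (hqb : 0 < qb) (hrb : (kids b.n b.par 0).card + 1 ≤ r) :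
    (kids (a.attach b hqb hrb).n (a.attach b hqb hrb).par 0).card
      = (kids a.n a.par 0).card + 1 := by
  show (kids (a.n + b.n) (comb a.n a.par b.par) 0).card = _
  rw [kids_comb_root a.hn b.hn, Finset.card_insert_of_notMem (by
    simp only [kids, Finset.mem_filter, Finset.mem_range]; omega)]

def RT.cast {r : ℕ} {α q q' : ℝ} (h : q = q') (T : RT r α q) : RT r α q' := h ▸ T

lemma RT.cast_kids {r : ℕ} {α q q' : ℝ} (h : q = q') (T : RT r α q) :
    (kids (T.cast h).n (T.cast h).par 0).card = (kids T.n T.par 0).card := by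
  subst h; rfl

lemma lset_pos {r : ℕ} {α : ℝ} (hα : 2 ≤ α) {q : ℝ} (h : LSet r α q) : 0 < q := by
  induction h with
  | base => linarith
  | step s hs1 hsr q hmem hpos ih => exact hpos

lemma build_aux {r : ℕ} (hr : 1 ≤ r) {α : ℝ} :
    ∀ (s : ℕ), s ≤ r - 1 → ∀ (q : Fin s → ℝ), (∀ i, 0 < q i) →
    (∀ i, ∃ T : RT r α (q i), (kids T.n T.par 0).card ≤ r - 1) →
    ∃ T : RT r α (α - 1 - s - ∑ i, (q i)⁻¹), (kids T.n T.par 0).card = s := by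
  intro s
  induction s with
  | zero =>
    intro _ q _ _
    have h : (α - 1) = (α - 1 - (0:ℕ) - ∑ i : Fin 0, (q i)⁻¹) := by simp
    refine ⟨(RT.base r α).cast h, ?_⟩
    rw [RT.cast_kids]
    exact RT.base_kids r α
  | succ s ih =>
    intro hs q hq hex
    obtain ⟨T, hT⟩ := ih (by omega) (fun i => q i.castSucc) (fun i => hq _) (fun i => hex _)
    obtain ⟨B, hB⟩ := hex (Fin.last s)
    have hrb : (kids B.n B.par 0).card + 1 ≤ r := by omega
    have hval : (α - 1 - (s:ℕ) - ∑ i : Fin s, (q i.castSucc)⁻¹) - 1 - (q (Fin.last s))⁻¹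
        = α - 1 - ((s+1 : ℕ) : ℝ) - ∑ i : Fin (s+1), (q i)⁻¹ := by
      rw [Fin.sum_univ_castSucc]
      push_cast
      ring
    refine ⟨(T.attach B (hq (Fin.last s)) hrb).cast hval, ?_⟩
    rw [RT.cast_kids, RT.attach_kids, hT]

lemma exists_RT {r : ℕ} {α : ℝ} (hr : 1 ≤ r) (hα : 2 ≤ α) {q : ℝ} (h : LSet r α q) :
    ∃ T : RT r α q, (kids T.n T.par 0).card ≤ r - 1 := by
  induction h with
  | base => exact ⟨RT.base r α, by rw [RT.base_kids]; omega⟩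
  | step s hs1 hsr q hmem hpos ih =>
    obtain ⟨T, hT⟩ := build_aux hr s hsr q (fun i => lset_pos hα (hmem i)) ih
    exact ⟨T, by omega⟩

theorem stmt_8 (r : ℕ) (hr : 1 ≤ r) (α : ℝ) (hα : 2 ≤ α) (h1 : LSet r α 1) :
    ∃ (n : ℕ) (G : SimpleGraph (Fin n)),
      2 ≤ n ∧ G.IsTree ∧ maxDeg G ≤ r ∧ IsLapSpecRad G α := by
  obtain ⟨T, hT⟩ := exists_RT hr hα h1
  have hrb : (kids T.n T.par 0).card + 1 ≤ r := by omega
  let F : RT r α (1 - 1 - 1⁻¹) := T.attach T one_pos hrb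
  have hkF : (kids F.n F.par 0).card = (kids T.n T.par 0).card + 1 :=
    RT.attach_kids T T one_pos hrb
  have hTn := T.hn
  have hn2 : 2 ≤ F.n := by
    show 2 ≤ T.n + T.n
    omega
  have hnpos : 0 < F.n := by omega
  refine ⟨F.n, graphOf F.n F.par, hn2, graphOf_isTree F.hpar hnpos, ?_, ?_⟩
  · show (letI := Classical.decRel (graphOf F.n F.par).Adj;
      (graphOf F.n F.par).maxDegree) ≤ r
    letI := Classical.decRel (graphOf F.n F.par).Adj
    apply SimpleGraph.maxDegree_le_of_forall_degree_le
    intro v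
    rw [degree_graphOf F.hpar v]
    by_cases hv : (v : ℕ) = 0
    · rw [hv, if_pos rfl, hkF]
      omega
    · rw [if_neg hv]
      exact F.hdeg v hv v.isLt
  · show (letI := Classical.decEq (Fin F.n)
      letI := Classical.decRel (graphOf F.n F.par).Adj
      α ∈ spectrum ℝ ((graphOf F.n F.par).lapMatrix ℝ) ∧
        ∀ x ∈ spectrum ℝ ((graphOf F.n F.par).lapMatrix ℝ), x ≤ α)
    letI := Classical.decEq (Fin F.n)
    letI := Classical.decRel (graphOf F.n F.par).Adj
    refine spec_bound ⟨⟨0, hnpos⟩⟩ (graphOf F.n F.par)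
      (fun v : Fin F.n => if F.col v then (-1 : ℝ) else 1) ?_ ?_
      (fun v : Fin F.n => F.y v) (fun v => F.hy v v.isLt) α ?_
    · intro v
      by_cases h : F.col (v : ℕ) <;> simp [h]
    · intro u v huv
      have hcol : F.col (u : ℕ) ≠ F.col (v : ℕ) := by
        rcases (graphOf_adj'.mp huv).2 with ⟨h0, he⟩ | ⟨h0, he⟩
        · have h' := F.hcol u h0 u.isLt
          rw [he] at h'
          exact h'.symm
        · have h' := F.hcol v h0 v.isLt
          rw [he] at h'
          exact h'
      by_cases h1 : F.col (u : ℕ) <;> by_cases h2 : F.col (v : ℕ) <;> simp_all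
    · intro v
      rw [degree_graphOf F.hpar v, sum_neighbors F.hpar (fun u => F.y u) v]
      by_cases hv : (v : ℕ) = 0
      · have h0 := F.heig0
        have hval : α - 1 - (1 - 1 - 1⁻¹) = α := by norm_num
        rw [hval] at h0
        simp only [hv]
        norm_num
        linarith [h0]
      · rw [if_neg hv, if_neg hv]
        have he := F.heig (v : ℕ) hv v.isLt
        push_cast
        push_cast at he
        linarith [he]
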